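/- (The Genial Entropy Inequality) For any corner density f : I → [0,∞), one has -1 - ∫_I f(x) ln(x f(x)) dx ≥ 0; that is, the genial entropy of any corner density is nonnegative. -/

import Mathlib

open MeasureTheory

/-- A corner density: `I ∪ {0}` is a connected interval contained in `[0,∞)`,
`f` is nonnegative and monotone decreasing on `I`, and `∫_I f = 1`. -/
def IsCornerDensity (I : Set ℝ) (f : ℝ → ℝ) : Prop :=
  I ⊆ Set.Ici 0 ∧ (I ∪ {0}).OrdConnected ∧ (∀ x ∈ I, 0 ≤ f x) ∧
    AntitoneOn f I ∧ (∫ x in I, f x) = 1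

/-- The (upper) lintegral of `-log` over `(0,1]` equals `1`. -/
lemma lintegral_neg_log_Ioc :
    ∫⁻ u in Set.Ioc (0:ℝ) 1, ENNReal.ofReal (-Real.log u) = 1 := by
  have hhm : Measurable fun u : ℝ => ENNReal.ofReal (-Real.log u) :=
    (Real.measurable_log.neg).ennreal_ofReal
  set ε : ℕ → ℝ := fun n => ((n : ℝ) + 1)⁻¹ with hε
  have hεpos : ∀ n, 0 < ε n := fun n => by positivity
  have hεle1 : ∀ n, ε n ≤ 1 := by
    intro n
    rw [hε]
    simp only
    rw [inv_le_one_iff₀]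
    right; linarith [Nat.cast_nonneg (α := ℝ) n]
  -- value of the truncated lintegral
  have hval : ∀ n : ℕ, (∫⁻ u in Set.Ioc (ε n) 1, ENNReal.ofReal (-Real.log u))
      = ENNReal.ofReal (1 - ε n + ε n * Real.log (ε n)) := by
    intro n
    have h0 : (0:ℝ) ∉ Set.uIcc (ε n) 1 := by
      rw [Set.uIcc_of_le (hεle1 n)]
      intro hc
      exact absurd hc.1 (not_le.mpr (hεpos n))
    have hii : IntervalIntegrable Real.log volume (ε n) 1 :=
      intervalIntegral.intervalIntegrable_log h0
    have hio : IntegrableOn Real.log (Set.Ioc (ε n) 1) volume :=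
      (intervalIntegrable_iff_integrableOn_Ioc_of_le (hεle1 n)).mp hii
    have hio' : IntegrableOn (fun u => -Real.log u) (Set.Ioc (ε n) 1) volume := hio.neg
    have hnn : 0 ≤ᵐ[volume.restrict (Set.Ioc (ε n) 1)] fun u => -Real.log u := by
      refine (ae_restrict_iff' measurableSet_Ioc).mpr (Filter.Eventually.of_forall ?_)
      intro u hu
      simp only [Pi.zero_apply, neg_nonneg]
      exact Real.log_nonpos (le_of_lt (lt_trans (hεpos n) hu.1)) hu.2
    have hkey := ofReal_integral_eq_lintegral_ofReal hio' hnn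
    rw [← hkey]
    congr 1
    have hIoc : (∫ u in Set.Ioc (ε n) 1, -Real.log u) = ∫ u in (ε n)..1, -Real.log u := by
      rw [intervalIntegral.integral_of_le (hεle1 n)]
    rw [hIoc, intervalIntegral.integral_neg, integral_log]
    simp [Real.log_one]
    ring
  -- monotone family of indicator functions
  set φ : ℕ → ℝ → ENNReal :=
    fun n => (Set.Ioc (ε n) 1).indicator (fun u => ENNReal.ofReal (-Real.log u)) with hφ
  have hφmeas : ∀ n, Measurable (φ n) := fun n => hhm.indicator measurableSet_Ioc
  have hεanti : ∀ ⦃m n : ℕ⦄, m ≤ n → ε n ≤ ε m := by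
    intro m n hmn
    rw [hε]
    simp only
    apply inv_anti₀
    · positivity
    · have : (m:ℝ) ≤ n := Nat.cast_le.mpr hmn
      linarith
  have hφmono : Monotone φ := by
    intro m n hmn
    refine Set.indicator_le_indicator_of_subset ?_ (fun u => zero_le)
    exact Set.Ioc_subset_Ioc_left (hεanti hmn)
  have hφsup : ∀ u, (⨆ n, φ n u)
      = (Set.Ioc (0:ℝ) 1).indicator (fun u => ENNReal.ofReal (-Real.log u)) u := by
    intro u
    by_cases hu : u ∈ Set.Ioc (0:ℝ) 1
    · rw [Set.indicator_of_mem hu]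
      refine le_antisymm (iSup_le fun n => ?_) ?_
      · exact Set.indicator_le_self _ _ u
      · obtain ⟨n, hn⟩ := exists_nat_one_div_lt hu.1
        have hmem : u ∈ Set.Ioc (ε n) 1 := by
          constructor
          · have h1 : (1:ℝ) / (n + 1) < u := hn
            rw [hε]; simpa [one_div] using h1
          · exact hu.2
        calc ENNReal.ofReal (-Real.log u) = φ n u := by
              rw [hφ]; simp [Set.indicator_of_mem hmem]
        _ ≤ ⨆ n, φ n u := le_iSup (fun n => φ n u) n
    · rw [Set.indicator_of_notMem hu]
      refine le_antisymm (iSup_le fun n => ?_) zero_le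
      have hnot : u ∉ Set.Ioc (ε n) 1 := fun hc =>
        hu ⟨lt_trans (hεpos n) hc.1, hc.2⟩
      rw [hφ]; simp [Set.indicator_of_notMem hnot]
  -- monotone convergence
  have hMC : (∫⁻ u, (Set.Ioc (0:ℝ) 1).indicator (fun u => ENNReal.ofReal (-Real.log u)) u)
      = ⨆ n, ∫⁻ u, φ n u := by
    rw [← lintegral_iSup hφmeas hφmono]
    congr 1
    ext u
    rw [hφsup u]
  have hLHS : (∫⁻ u in Set.Ioc (0:ℝ) 1, ENNReal.ofReal (-Real.log u))
      = ∫⁻ u, (Set.Ioc (0:ℝ) 1).indicator (fun u => ENNReal.ofReal (-Real.log u)) u := by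
    rw [lintegral_indicator measurableSet_Ioc]
  have hφn : ∀ n, (∫⁻ u, φ n u) = ENNReal.ofReal (1 - ε n + ε n * Real.log (ε n)) := by
    intro n
    rw [hφ]
    simp only
    rw [lintegral_indicator measurableSet_Ioc]
    exact hval n
  -- the supremum is 1
  have htend : Filter.Tendsto (fun n => ∫⁻ u, φ n u) Filter.atTop (nhds 1) := by
    have hε0 : Filter.Tendsto ε Filter.atTop (nhds 0) := by
      have h1 := tendsto_one_div_add_atTop_nhds_zero_nat (𝕜 := ℝ)
      refine h1.congr fun n => ?_
      rw [hε]; simp [one_div]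
    have hε0' : Filter.Tendsto ε Filter.atTop (nhdsWithin 0 (Set.Ioi 0)) :=
      tendsto_nhdsWithin_of_tendsto_nhds_of_eventually_within _ hε0
        (Filter.Eventually.of_forall fun n => hεpos n)
    have hlog : Filter.Tendsto (fun n => ε n * Real.log (ε n)) Filter.atTop (nhds 0) := by
      have h1 := (tendsto_log_mul_rpow_nhdsGT_zero one_pos).comp hε0'
      refine h1.congr fun n => ?_
      simp [Real.rpow_one, mul_comm]
    have hre : Filter.Tendsto (fun n => 1 - ε n + ε n * Real.log (ε n))
        Filter.atTop (nhds 1) := by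
      have h1 := ((tendsto_const_nhds (x := (1:ℝ))).sub hε0).add hlog
      simpa using h1
    have h2 := (ENNReal.continuous_ofReal.tendsto 1).comp hre
    simp only [Function.comp, ENNReal.ofReal_one] at h2
    refine Filter.Tendsto.congr (fun n => (hφn n).symm) h2
  have hmonoL : Monotone fun n => ∫⁻ u, φ n u := fun m n hmn => lintegral_mono (hφmono hmn)
  have hsup : (⨆ n, ∫⁻ u, φ n u) = 1 :=
    tendsto_nhds_unique (tendsto_atTop_iSup hmonoL) htend
  rw [hLHS, hMC, hsup]

/-- The Genial Entropy Inequality.  For any corner density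
`f : I → [0,∞)` (whose genial entropy integral exists),
`-1 - ∫_I f(x) ln(x f(x)) dx ≥ 0`. -/
theorem genialEntropy_nonneg (I : Set ℝ) (f : ℝ → ℝ) (hf : IsCornerDensity I f)
    (hint : IntegrableOn (fun x => f x * Real.log (x * f x)) I) :
    -1 - ∫ x in I, f x * Real.log (x * f x) ≥ 0 := by
  obtain ⟨hIpos, hIoc, hfnn, hfant, hfint1⟩ := hf
  -- f is integrable on I
  have hfi : IntegrableOn f I := by
    by_contra h
    rw [MeasureTheory.integral_undef h] at hfint1
    norm_num at hfint1
  -- I is measurable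
  have hImeas : MeasurableSet I := by
    by_cases h0 : (0:ℝ) ∈ I
    · have hU : I ∪ {0} = I := by
        apply Set.union_eq_self_of_subset_right
        simpa using h0
      have := hIoc.measurableSet
      rwa [hU] at this
    · have hU : I = (I ∪ {0}) \ {0} := by
        ext x
        simp only [Set.mem_diff, Set.mem_union, Set.mem_singleton_iff]
        constructor
        · intro hx
          exact ⟨Or.inl hx, fun hx0 => h0 (hx0 ▸ hx)⟩
        · rintro ⟨hx | hx, hne⟩
          · exact hx
          · exact absurd hx hne
      rw [hU]
      exact hIoc.measurableSet.diff (measurableSet_singleton 0)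
  -- the open interval below any point of I lies in I
  have hIoo : ∀ x ∈ I, Set.Ioo 0 x ⊆ I := by
    intro x hx t ht
    have hmem : t ∈ I ∪ {0} :=
      hIoc.out (Or.inr rfl) (Or.inl hx) ⟨ht.1.le, ht.2.le⟩
    rcases hmem with h | h
    · exact h
    · exact absurd h (by simp [ne_of_gt ht.1])
  -- the extended density and its primitive (CDF)
  set g : ℝ → ℝ := I.indicator f with hg_def
  have hgint : Integrable g := (integrable_indicator_iff hImeas).mpr hfi
  have hgnn : ∀ x, 0 ≤ g x := fun x => Set.indicator_nonneg hfnn x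
  have hgtot : (∫ x, g x) = 1 := by
    rw [hg_def, integral_indicator hImeas]
    exact hfint1
  set F : ℝ → ℝ := fun x => ∫ t in Set.Iic x, g t with hF_def
  have hFval : ∀ x, F x = ∫ t in I ∩ Set.Iic x, f t := by
    intro x
    rw [hF_def]
    simp only
    rw [hg_def, setIntegral_indicator hImeas, Set.inter_comm]
  have hFmono : Monotone F := by
    intro x y hxy
    exact setIntegral_mono_set hgint.integrableOn
      (Filter.Eventually.of_forall hgnn)
      (HasSubset.Subset.eventuallyLE (Set.Iic_subset_Iic.mpr hxy))
  have hFcont : Continuous F := by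
    have h1 : Continuous fun b => ∫ x in (0:ℝ)..b, g x := hgint.continuous_primitive 0
    have h2 : ∀ b, F b = F 0 + ∫ x in (0:ℝ)..b, g x := by
      intro b
      rw [← intervalIntegral.integral_Iic_sub_Iic hgint.integrableOn hgint.integrableOn]
      simp only [hF_def]
      ring
    have hFeq : F = fun b => F 0 + ∫ x in (0:ℝ)..b, g x := funext h2
    rw [hFeq]
    exact continuous_const.add h1
  have hFmeas : Measurable F := hFcont.measurable
  have hFle1 : ∀ x, F x ≤ 1 := by
    intro x
    calc F x ≤ ∫ t, g t :=
          setIntegral_le_integral hgint (Filter.Eventually.of_forall hgnn)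
    _ = 1 := hgtot
  have hFnn : ∀ x, 0 ≤ F x := fun x =>
    setIntegral_nonneg measurableSet_Iic fun t _ => hgnn t
  -- the key pointwise bound x * f x ≤ F x
  have hkey : ∀ x ∈ I, 0 < x → x * f x ≤ F x := by
    intro x hx hx0
    have hsub : Set.Ioo 0 x ⊆ I ∩ Set.Iic x := fun t ht =>
      ⟨hIoo x hx ht, le_of_lt ht.2⟩
    have hi1 : IntegrableOn f (I ∩ Set.Iic x) := hfi.mono_set Set.inter_subset_left
    have hnn : 0 ≤ᵐ[volume.restrict (I ∩ Set.Iic x)] f := by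
      refine (ae_restrict_iff' (hImeas.inter measurableSet_Iic)).mpr ?_
      exact Filter.Eventually.of_forall fun t ht => hfnn t ht.1
    have h1 : (∫ t in Set.Ioo 0 x, f t) ≤ ∫ t in I ∩ Set.Iic x, f t :=
      setIntegral_mono_set hi1 hnn (HasSubset.Subset.eventuallyLE hsub)
    have h2 : x * f x ≤ ∫ t in Set.Ioo 0 x, f t := by
      have hconst : (∫ (_ : ℝ) in Set.Ioo 0 x, f x) = x * f x := by
        rw [setIntegral_const, measureReal_def, Real.volume_Ioo, smul_eq_mul]
        rw [ENNReal.toReal_ofReal (by linarith)]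
        ring_nf
      rw [← hconst]
      refine setIntegral_mono_on ?_ (hfi.mono_set (hIoo x hx)) measurableSet_Ioo ?_
      · refine (integrableOn_const_iff enorm_ne_top).mpr (Or.inr ?_)
        rw [Real.volume_Ioo]
        exact ENNReal.ofReal_lt_top
      · intro t ht
        exact hfant (hIoo x hx ht) hx ht.2.le
    rw [hFval]
    exact le_trans h2 h1
  -- F tends to 1 at infinity (along ℕ)
  have hFtop : Filter.Tendsto (fun n : ℕ => F (n : ℝ)) Filter.atTop (nhds 1) := by
    have hU : (⋃ n : ℕ, Set.Iic ((n : ℕ) : ℝ)) = Set.univ := by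
      ext x
      simp only [Set.mem_iUnion, Set.mem_Iic, Set.mem_univ, iff_true]
      exact exists_nat_ge x
    have hmono : Monotone fun n : ℕ => Set.Iic ((n : ℕ) : ℝ) := fun a b hab =>
      Set.Iic_subset_Iic.mpr (Nat.cast_le.mpr hab)
    have := tendsto_setIntegral_of_monotone (f := g) (μ := volume)
      (fun n : ℕ => measurableSet_Iic) hmono (by rw [hU]; exact hgint.integrableOn)
    rw [hU] at this
    simpa [hgtot] using this
  -- the density measure μ
  have hdmeas : AEMeasurable (fun x => ENNReal.ofReal (f x)) (volume.restrict I) :=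
    (hfi.aestronglyMeasurable.aemeasurable).ennreal_ofReal
  set μ : Measure ℝ := (volume.restrict I).withDensity (fun x => ENNReal.ofReal (f x))
    with hμ_def
  have hμs : ∀ s : Set ℝ, MeasurableSet s →
      μ s = ENNReal.ofReal (∫ t in I ∩ s, f t) := by
    intro s hs
    rw [hμ_def, withDensity_apply _ hs, Measure.restrict_restrict hs, Set.inter_comm s I]
    rw [ofReal_integral_eq_lintegral_ofReal (hfi.mono_set Set.inter_subset_left) ?_]
    refine (ae_restrict_iff' (hImeas.inter hs)).mpr
      (Filter.Eventually.of_forall fun t ht => hfnn t ht.1)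
  have hμIic : ∀ x, μ (Set.Iic x) = ENNReal.ofReal (F x) := by
    intro x
    rw [hμs _ measurableSet_Iic, hFval]
  have hμuniv : μ Set.univ = 1 := by
    rw [hμs _ MeasurableSet.univ, Set.inter_univ, hfint1, ENNReal.ofReal_one]
  -- sublevel sets of F
  have hlevel : ∀ t : ℝ, 0 ≤ t → t < 1 → μ {x | F x ≤ t} = ENNReal.ofReal t := by
    intro t ht0 ht1
    have hSne : ({x : ℝ | F x ≤ t}).Nonempty := by
      refine ⟨-1, ?_⟩
      have hF1 : F (-1) = 0 := by
        rw [hFval]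
        have hempty : I ∩ Set.Iic (-1:ℝ) = ∅ := by
          apply Set.eq_empty_of_forall_notMem
          rintro y ⟨hy, hy1⟩
          have hy0 := hIpos hy
          simp only [Set.mem_Ici] at hy0
          simp only [Set.mem_Iic] at hy1
          linarith
        rw [hempty]
        simp
      simp only [Set.mem_setOf_eq, hF1]
      exact ht0
    have hSbdd : BddAbove {x : ℝ | F x ≤ t} := by
      obtain ⟨N, hN⟩ := (hFtop.eventually (eventually_gt_nhds ht1)).exists
      refine ⟨(N : ℝ), fun x hx => ?_⟩
      by_contra hc
      push_neg at hc
      have := hFmono hc.le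
      simp only [Set.mem_setOf_eq] at hx
      linarith
    have hSclosed : IsClosed {x : ℝ | F x ≤ t} := isClosed_le hFcont continuous_const
    set c := sSup {x : ℝ | F x ≤ t} with hc_def
    have hcS : c ∈ {x : ℝ | F x ≤ t} := hSclosed.csSup_mem hSne hSbdd
    have hSeq : {x : ℝ | F x ≤ t} = Set.Iic c := by
      ext x
      constructor
      · intro hx
        exact le_csSup hSbdd hx
      · intro hx
        exact le_trans (hFmono hx) hcS
    have hFc : F c = t := by
      refine le_antisymm hcS ?_
      by_contra hcon
      push_neg at hcon
      have hev : ∀ᶠ y in nhds c, F y < t :=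
        (hFcont.tendsto c).eventually (eventually_lt_nhds hcon)
      have hev' : ∀ᶠ y in nhdsWithin c (Set.Ioi c), F y < t ∧ y ∈ Set.Ioi c :=
        (hev.filter_mono nhdsWithin_le_nhds).and self_mem_nhdsWithin
      obtain ⟨y, hy1, hy2⟩ := hev'.exists
      have : y ≤ c := le_csSup hSbdd hy1.le
      exact absurd hy2 (not_lt.mpr this)
    rw [hSeq, hμIic, hFc]
  -- the pushforward of μ under F is the uniform measure on (0,1]
  have hmap : Measure.map F μ = volume.restrict (Set.Ioc 0 1) := by
    haveI hfin : IsFiniteMeasure (Measure.map F μ) := by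
      constructor
      rw [Measure.map_apply hFmeas MeasurableSet.univ, Set.preimage_univ, hμuniv]
      exact ENNReal.one_lt_top
    refine Measure.ext_of_Iic (Measure.map F μ) _ fun t => ?_
    rw [Measure.map_apply hFmeas measurableSet_Iic,
      Measure.restrict_apply measurableSet_Iic]
    have hpre : F ⁻¹' Set.Iic t = {x | F x ≤ t} := rfl
    rcases lt_or_ge t 0 with h | h
    · have h1 : {x : ℝ | F x ≤ t} = ∅ := by
        ext x
        simp only [Set.mem_setOf_eq, Set.mem_empty_iff_false, iff_false, not_le]
        exact lt_of_lt_of_le h (hFnn x)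
      have h2 : Set.Iic t ∩ Set.Ioc 0 1 = ∅ := by
        apply Set.eq_empty_of_forall_notMem
        rintro y ⟨hy1, hy2, _⟩
        simp only [Set.mem_Iic] at hy1
        linarith
      rw [hpre, h1, h2]
      simp
    rcases lt_or_ge t 1 with h1 | h1
    · have h2 : Set.Iic t ∩ Set.Ioc 0 1 = Set.Ioc 0 t := by
        ext y
        simp only [Set.mem_inter_iff, Set.mem_Iic, Set.mem_Ioc]
        constructor
        · rintro ⟨hy1, hy2, hy3⟩
          exact ⟨hy2, hy1⟩
        · rintro ⟨hy1, hy2⟩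
          exact ⟨hy2, hy1, le_trans hy2 h1.le⟩
      rw [hpre, hlevel t h h1, h2, Real.volume_Ioc]
      simp
    · have h2 : F ⁻¹' Set.Iic t = Set.univ := by
        ext x
        simp only [Set.mem_preimage, Set.mem_Iic, Set.mem_univ, iff_true]
        exact le_trans (hFle1 x) h1
      have h3 : Set.Iic t ∩ Set.Ioc 0 1 = Set.Ioc 0 1 := by
        refine Set.inter_eq_self_of_subset_right fun y hy => ?_
        exact le_trans hy.2 h1
      rw [h2, hμuniv, h3, Real.volume_Ioc]
      norm_num
  -- transfer the log integral through the pushforward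
  have hlogmeas : Measurable fun u : ℝ => ENNReal.ofReal (-Real.log u) :=
    (Real.measurable_log.neg).ennreal_ofReal
  have e2 : (1 : ENNReal) = ∫⁻ x, ENNReal.ofReal (-Real.log (F x)) ∂μ := by
    rw [← lintegral_neg_log_Ioc, ← hmap, lintegral_map hlogmeas hFmeas]
  have e3 : (∫⁻ x, ENNReal.ofReal (-Real.log (F x)) ∂μ)
      = ∫⁻ x in I, ENNReal.ofReal (f x) * ENNReal.ofReal (-Real.log (F x)) := by
    have hg' : AEMeasurable (fun x => ENNReal.ofReal (-Real.log (F x))) (volume.restrict I) :=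
      (hlogmeas.comp hFmeas).aemeasurable
    rw [hμ_def, lintegral_withDensity_eq_lintegral_mul₀ hdmeas hg']
    simp only [Pi.mul_apply]
  -- the a.e. pointwise comparison
  have hmono2 : (∫⁻ x in I, ENNReal.ofReal (f x) * ENNReal.ofReal (-Real.log (F x)))
      ≤ ∫⁻ x in I, ENNReal.ofReal (-(f x * Real.log (x * f x))) := by
    refine lintegral_mono_ae ?_
    have h0 : ∀ᵐ x ∂(volume.restrict I), x ∈ I := ae_restrict_mem hImeas
    have hne : ∀ᵐ x ∂(volume.restrict I), x ≠ 0 := by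
      have hvol : ∀ᵐ x : ℝ, x ≠ 0 := by
        refine ae_iff.mpr ?_
        have : {x : ℝ | ¬x ≠ 0} = {0} := by
          ext x; simp
        rw [this]
        exact Real.volume_singleton
      exact hvol.filter_mono (ae_mono Measure.restrict_le_self)
    filter_upwards [h0, hne] with x hx hxne
    rcases eq_or_lt_of_le (hfnn x hx) with hf0 | hf0
    · rw [← hf0]
      simp
    · have hx0 : 0 < x := lt_of_le_of_ne (hIpos hx) (Ne.symm hxne)
      have hxf : 0 < x * f x := mul_pos hx0 hf0
      have hle : x * f x ≤ F x := hkey x hx hx0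
      have hlog : Real.log (x * f x) ≤ Real.log (F x) := Real.log_le_log hxf hle
      have heq : -(f x * Real.log (x * f x)) = f x * (-Real.log (x * f x)) := by ring
      rw [heq, ENNReal.ofReal_mul (hfnn x hx)]
      refine mul_le_mul_right (ENNReal.ofReal_le_ofReal ?_) _
      linarith
  -- the integrand is nonpositive on I
  have hgle : ∀ x ∈ I, f x * Real.log (x * f x) ≤ 0 := by
    intro x hx
    rcases eq_or_lt_of_le (hfnn x hx) with hf0 | hf0
    · rw [← hf0]; simp
    · rcases eq_or_lt_of_le (Set.mem_Ici.mp (hIpos hx)) with hx0 | hx0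
      · rw [← hx0]; simp
      · have h1 : x * f x ≤ F x := hkey x hx hx0
        have h2 := hFle1 x
        refine mul_nonpos_iff.mpr (Or.inl ⟨hf0.le, ?_⟩)
        exact Real.log_nonpos (by positivity) (le_trans h1 h2)
  have hintneg : IntegrableOn (fun x => -(f x * Real.log (x * f x))) I := hint.neg
  have hofReal : ENNReal.ofReal (∫ x in I, -(f x * Real.log (x * f x)))
      = ∫⁻ x in I, ENNReal.ofReal (-(f x * Real.log (x * f x))) := by
    refine ofReal_integral_eq_lintegral_ofReal hintneg ?_
    refine (ae_restrict_iff' hImeas).mpr (Filter.Eventually.of_forall fun x hx => ?_)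
    simp only [Pi.zero_apply, neg_nonneg]
    exact hgle x hx
  -- put it all together
  have hA : (1 : ℝ) ≤ ∫ x in I, -(f x * Real.log (x * f x)) := by
    have hAnn : 0 ≤ ∫ x in I, -(f x * Real.log (x * f x)) := by
      refine integral_nonneg_of_ae ?_
      refine (ae_restrict_iff' hImeas).mpr (Filter.Eventually.of_forall fun x hx => ?_)
      simp only [Pi.zero_apply, neg_nonneg]
      exact hgle x hx
    have hchain : (1 : ENNReal) ≤ ENNReal.ofReal (∫ x in I, -(f x * Real.log (x * f x))) := by
      rw [hofReal]
      calc (1 : ENNReal) = ∫⁻ x, ENNReal.ofReal (-Real.log (F x)) ∂μ := e2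
      _ = ∫⁻ x in I, ENNReal.ofReal (f x) * ENNReal.ofReal (-Real.log (F x)) := e3
      _ ≤ ∫⁻ x in I, ENNReal.ofReal (-(f x * Real.log (x * f x))) := hmono2
    rw [← ENNReal.ofReal_one] at hchain
    exact (ENNReal.ofReal_le_ofReal_iff hAnn).mp hchain
  rw [integral_neg] at hA
  linarith
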